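/- arXiv:2001.10650 — 3 statements merged into one kernel-verified Lean document; each statement's English description precedes it below -/
import Mathlib

section
/- For all i,j ≥ 0 the coefficients f_{i,j} satisfy ((j+1)/√((2j+1)(2j+3))) f_{i,j+1} + f_{i,j} + (j/√((2j−1)(2j+1))) f_{i,j−1} = (2(i+1)/√((2i+1)(2i+3))) f_{i+1,j} + (2i/√((2i−1)(2i+1))) f_{i−1,j}, where when i = 0 (resp. j = 0) the term containing f_{i−1,j} (resp. f_{i,j−1}) is interpreted as 0 (its coefficient vanishes). -/
open MeasureTheory

open Polynomial intervalIntegral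

noncomputable def gp (n : ℕ) : Polynomial ℝ := ((X:Polynomial ℝ)^2 - 1)^n

lemma gp_div (n : ℕ) : ∀ k, k ≤ n → ∃ q : Polynomial ℝ,
    derivative^[k] (gp n) = ((X:Polynomial ℝ)^2 - 1)^(n-k) * q := by
  intro k
  induction k with
  | zero => intro _; exact ⟨1, by simp [gp]⟩
  | succ k ih =>
    intro hk
    obtain ⟨q, hq⟩ := ih (by omega)
    obtain ⟨m, hm⟩ : ∃ m, n - k = m + 1 := ⟨n - (k+1), by omega⟩
    have hm2 : n - (k+1) = m := by omega
    refine ⟨(C ((m:ℝ) + 1)) * (2*X) * q + ((X:Polynomial ℝ)^2-1) * derivative q, ?_⟩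
    rw [Function.iterate_succ_apply', hq, hm, hm2]
    rw [derivative_mul, derivative_pow]
    simp only [derivative_sub, derivative_one, derivative_pow, derivative_X,
      Nat.add_sub_cancel, sub_zero]
    push_cast
    simp only [show (C (2:ℝ)) = 2 from by rw [show (2:ℝ) = 1+1 by norm_num, map_add, map_one, one_add_one_eq_two]]
    ring

lemma gp_deriv_eval_one (n k : ℕ) (h : k < n) : (derivative^[k] (gp n)).eval 1 = 0 := by
  obtain ⟨q, hq⟩ := gp_div n k (le_of_lt h)
  have h1 : n - k ≠ 0 := by omega
  simp [hq, eval_pow, zero_pow h1]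

lemma gp_deriv_eval_neg_one (n k : ℕ) (h : k < n) : (derivative^[k] (gp n)).eval (-1) = 0 := by
  obtain ⟨q, hq⟩ := gp_div n k (le_of_lt h)
  have h1 : n - k ≠ 0 := by omega
  simp [hq, eval_pow]
  omega

lemma pii (p q : Polynomial ℝ) (a b : ℝ) :
    IntervalIntegrable (fun x => p.eval x * q.eval x) volume a b :=
  (p.continuous.mul q.continuous).intervalIntegrable a b

lemma pftc (p : Polynomial ℝ) (a b : ℝ) :
    ∫ x in a..b, (derivative p).eval x = p.eval b - p.eval a :=
  integral_eq_sub_of_hasDerivAt (fun x _ => p.hasDerivAt x)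
    ((derivative p).continuous.intervalIntegrable a b)

lemma pibp (p q : Polynomial ℝ) (h1 : q.eval 1 = 0) (h2 : q.eval (-1) = 0) :
    ∫ x in (-1:ℝ)..1, p.eval x * (derivative q).eval x
      = - ∫ x in (-1:ℝ)..1, (derivative p).eval x * q.eval x := by
  have h := pftc (p * q) (-1) 1
  rw [derivative_mul] at h
  simp only [eval_add, eval_mul, h1, h2, mul_zero, zero_mul, sub_zero] at h
  have hsplit : ∫ x in (-1:ℝ)..1,
      ((derivative p).eval x * q.eval x + p.eval x * (derivative q).eval x)
      = (∫ x in (-1:ℝ)..1, (derivative p).eval x * q.eval x)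
        + ∫ x in (-1:ℝ)..1, p.eval x * (derivative q).eval x :=
    integral_add (pii _ _ _ _) (pii _ _ _ _)
  rw [hsplit] at h
  linarith [h]

noncomputable def Rp (n : ℕ) : Polynomial ℝ := derivative^[n] (gp n)

lemma gp_monic (n : ℕ) : (gp n).Monic := by
  have h : ((X:Polynomial ℝ)^2 - 1).Monic := by
    simpa using monic_X_pow_sub_C (1:ℝ) (n := 2) (by norm_num)
  exact h.pow n

lemma gp_natDegree (n : ℕ) : (gp n).natDegree = 2*n := by
  have : ((X:Polynomial ℝ)^2 - 1).natDegree = 2 := by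
    simpa using natDegree_X_pow_sub_C (n := 2) (r := (1:ℝ))
  rw [gp, natDegree_pow, this, mul_comm]

lemma gp_coeff (n : ℕ) : (gp n).coeff (2*n) = 1 := by
  have := (gp_monic n).leadingCoeff
  rwa [Polynomial.leadingCoeff, gp_natDegree] at this

lemma Rp_coeff (n : ℕ) : (Rp n).coeff n = ((2*n).descFactorial n : ℝ) := by
  rw [Rp, coeff_iterate_derivative]
  have h : n + n = 2*n := by ring
  rw [h, gp_coeff]
  simp

lemma Rp_coeff_pos (n : ℕ) : 0 < (Rp n).coeff n := by
  rw [Rp_coeff]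
  have : (2*n).descFactorial n ≠ 0 := by
    rw [Ne, Nat.descFactorial_eq_zero_iff_lt]; omega
  exact_mod_cast Nat.pos_of_ne_zero this

lemma Rp_natDegree (n : ℕ) : (Rp n).natDegree = n := by
  refine le_antisymm ?_ (le_natDegree_of_ne_zero (ne_of_gt (Rp_coeff_pos n)))
  have := natDegree_iterate_derivative (gp n) n
  rwa [gp_natDegree, two_mul, Nat.add_sub_cancel] at this

lemma Rp_leadingCoeff_pos (n : ℕ) : 0 < (Rp n).leadingCoeff := by
  rw [Polynomial.leadingCoeff, Rp_natDegree]; exact Rp_coeff_pos n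

lemma pibpn (n : ℕ) : ∀ k, k ≤ n → ∀ p : Polynomial ℝ,
    ∫ x in (-1:ℝ)..1, p.eval x * (derivative^[k] (gp n)).eval x
      = (-1:ℝ)^k * ∫ x in (-1:ℝ)..1, (derivative^[k] p).eval x * (gp n).eval x := by
  intro k
  induction k with
  | zero => intro _ p; simp
  | succ k ih =>
    intro hk p
    rw [Function.iterate_succ_apply',
      pibp p _ (gp_deriv_eval_one n k (by omega)) (gp_deriv_eval_neg_one n k (by omega)),
      ih (by omega) (derivative p), ← Function.iterate_succ_apply]
    ring

lemma OL (p : Polynomial ℝ) (m : ℕ) (h : p.natDegree < m) :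
    ∫ x in (-1:ℝ)..1, p.eval x * (Rp m).eval x = 0 := by
  have := pibpn m m le_rfl p
  rw [iterate_derivative_eq_zero h] at this
  simpa [Rp] using this

noncomputable def Jn (n : ℕ) : ℝ := ∫ x in (-1:ℝ)..1, (gp n).eval x

lemma J0 : Jn 0 = 2 := by simp [Jn, gp]; norm_num

lemma Jrec (n : ℕ) : (2*(n:ℝ)+3) * Jn (n+1) = -(2*(n:ℝ)+2) * Jn n := by
  have hpoly : derivative (X * gp (n+1))
      = C (2*(n:ℝ)+3) * gp (n+1) + C (2*(n:ℝ)+2) * gp n := by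
    rw [gp, gp, derivative_mul, derivative_pow]
    simp only [derivative_sub, derivative_one, derivative_X_pow, derivative_X, sub_zero,
      Nat.add_sub_cancel]
    push_cast
    have hC2 : (C (2:ℝ)) = 2 := by
      rw [show (2:ℝ) = 1+1 by norm_num, map_add, map_one, one_add_one_eq_two]
    have hC3 : (C (3:ℝ)) = 3 := by
      rw [show (3:ℝ) = 1+1+1 by norm_num, map_add, map_add, map_one]; norm_num
    simp only [map_add, map_mul, hC2, hC3, Polynomial.C_1, map_natCast]
    ring
  have hint := pftc (X * gp (n+1)) (-1) 1
  rw [hpoly] at hint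
  have he1 : (X * gp (n+1)).eval 1 = 0 := by
    simp [gp, eval_pow]
  have he2 : (X * gp (n+1)).eval (-1) = 0 := by
    simp [gp, eval_pow]
  rw [he1, he2, sub_zero] at hint
  have hsplit : ∫ x in (-1:ℝ)..1,
      ((C (2*(n:ℝ)+3) * gp (n+1) + C (2*(n:ℝ)+2) * gp n).eval x)
      = (2*(n:ℝ)+3) * Jn (n+1) + (2*(n:ℝ)+2) * Jn n := by
    rw [show (fun x => (C (2*(n:ℝ)+3) * gp (n+1) + C (2*(n:ℝ)+2) * gp n).eval x)
        = fun x => (2*(n:ℝ)+3) * (gp (n+1)).eval x + (2*(n:ℝ)+2) * (gp n).eval x from by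
      funext x; simp]
    erw [integral_add ((continuous_const.mul (gp (n+1)).continuous).intervalIntegrable _ _)
      ((continuous_const.mul (gp n).continuous).intervalIntegrable _ _),
      intervalIntegral.integral_const_mul, intervalIntegral.integral_const_mul, Jn, Jn]
  rw [hsplit] at hint
  linarith

noncomputable def Nn (n : ℕ) : ℝ := ∫ x in (-1:ℝ)..1, (Rp n).eval x * (Rp n).eval x

lemma gp_iter_deriv_top (n : ℕ) : derivative^[2*n] (gp n) = C (((2*n).factorial : ℝ)) := by
  have hd : (derivative^[2*n] (gp n)).natDegree = 0 := by
    have := natDegree_iterate_derivative (gp n) (2*n)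
    rw [gp_natDegree] at this
    omega
  have hc : (derivative^[2*n] (gp n)).coeff 0 = (((2*n).factorial : ℕ) : ℝ) := by
    rw [coeff_iterate_derivative, zero_add, gp_coeff, Nat.descFactorial_self]
    simp
  rw [eq_C_of_natDegree_le_zero (le_of_eq hd), hc]

lemma Nval (n : ℕ) : Nn n = (-1:ℝ)^n * ((2*n).factorial : ℝ) * Jn n := by
  have h := pibpn n n le_rfl (Rp n)
  rw [show derivative^[n] (Rp n) = derivative^[2*n] (gp n) from by
      rw [Rp, ← Function.iterate_add_apply]; congr 1; omega,
    gp_iter_deriv_top] at h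
  have h2 : (∫ x in (-1:ℝ)..1, (C (((2*n).factorial : ℝ))).eval x * (gp n).eval x)
      = ((2*n).factorial : ℝ) * Jn n := by
    simp only [eval_C]
    rw [intervalIntegral.integral_const_mul, Jn]
  rw [h2] at h
  rw [Nn, Rp] at *
  rw [h]; ring

lemma Nrec (n : ℕ) : Nn (n+1) = ((2*(n:ℝ)+1)*(2*(n:ℝ)+2)^2/(2*(n:ℝ)+3)) * Nn n := by
  have h3 : (0:ℝ) < 2*(n:ℝ)+3 := by positivity
  have hJ : Jn (n+1) = -(2*(n:ℝ)+2)/(2*(n:ℝ)+3) * Jn n := by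
    have := Jrec n
    field_simp
    linarith
  have hfac : (((2*(n+1)).factorial) : ℝ) = (2*(n:ℝ)+2) * (2*(n:ℝ)+1) * (((2*n).factorial) : ℝ) := by
    have h : 2*(n+1) = (2*n+1) + 1 := by ring
    rw [h, Nat.factorial_succ, Nat.factorial_succ]
    push_cast
    ring
  rw [Nval, Nval, hfac, hJ]
  field_simp
  ring

lemma Npos (n : ℕ) : 0 < Nn n := by
  induction n with
  | zero =>
    have h : Nn 0 = 2 := by
      rw [Nval, J0]; norm_num
    rw [h]; norm_num
  | succ n ih =>
    rw [Nrec]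
    have h1 : (0:ℝ) < 2*(n:ℝ)+1 := by positivity
    have h3 : (0:ℝ) < 2*(n:ℝ)+3 := by positivity
    have h2 : (0:ℝ) < 2*(n:ℝ)+2 := by positivity
    positivity

lemma Rp_parity (n : ℕ) (x : ℝ) : (Rp n).eval (-x) = (-1:ℝ)^n * (Rp n).eval x := by
  have key : ∀ k (p : Polynomial ℝ),
      derivative^[k] (p.comp (-X)) = (-1:ℝ)^k • ((derivative^[k] p).comp (-X)) := by
    intro k
    induction k with
    | zero => intro p; simp
    | succ k ih =>
      intro p
      rw [Function.iterate_succ_apply,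
        show derivative (p.comp (-X)) = (-1:ℝ) • ((derivative p).comp (-X)) from by
          rw [derivative_comp]; simp,
        iterate_derivative_smul, ih (derivative p), smul_smul,
        ← Function.iterate_succ_apply]
      congr 1
      ring
  have hgp : (gp n).comp (-X) = gp n := by
    simp [gp, pow_comp, sub_comp, X_comp, one_comp, neg_sq]
  have h1 : Rp n = (-1:ℝ)^n • ((Rp n).comp (-X)) := by
    conv_lhs => rw [Rp, ← hgp, key n (gp n)]
    rw [Rp]
  have hsq : ((-1:ℝ)^n) * ((-1:ℝ)^n) = 1 := by
    rw [← pow_add, ← two_mul, pow_mul]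
    norm_num
  have h2 : (Rp n).comp (-X) = (-1:ℝ)^n • Rp n := by
    calc (Rp n).comp (-X) = (((-1:ℝ)^n) * ((-1:ℝ)^n)) • (Rp n).comp (-X) := by
          rw [hsq, one_smul]
      _ = (-1:ℝ)^n • Rp n := by rw [← smul_smul, ← h1]
  have := congrArg (eval x) h2
  simpa [eval_comp] using this

lemma odd_integral (h : ℝ → ℝ) (hodd : ∀ x, h (-x) = - h x)
    (hint : IntervalIntegrable h volume (-1) 1) : ∫ x in (-1:ℝ)..1, h x = 0 := by
  have key : (∫ x in (-1:ℝ)..1, h (-x)) = ∫ x in (-1:ℝ)..1, h x := by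
    simpa using intervalIntegral.integral_comp_neg (a := (-1:ℝ)) (b := 1) (f := h)
  have key2 : (∫ x in (-1:ℝ)..1, h (-x)) = - ∫ x in (-1:ℝ)..1, h x := by
    simp only [hodd]
    exact intervalIntegral.integral_neg
  rw [key] at key2
  linarith

lemma span_zero : ∀ n, ∀ p : Polynomial ℝ, p.natDegree ≤ n →
    (∀ k, k ≤ n → (∫ x in (-1:ℝ)..1, p.eval x * (Rp k).eval x) = 0) → p = 0 := by
  intro n
  induction n with
  | zero =>
    intro p hdeg hint
    have hp : p = C (p.coeff 0) := eq_C_of_natDegree_le_zero hdeg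
    have h0 := hint 0 le_rfl
    have hR0 : Rp 0 = 1 := by simp [Rp, gp]
    rw [hR0] at h0
    simp only [eval_one, mul_one] at h0
    rw [hp] at h0
    simp only [eval_C, intervalIntegral.integral_const, smul_eq_mul] at h0
    have hz : p.coeff 0 = 0 := by norm_num at h0; linarith
    rw [hp, hz, map_zero]
  | succ n ih =>
    intro p hdeg hint
    set c : ℝ := (Rp (n+1)).coeff (n+1) with hc
    have hcpos : 0 < c := Rp_coeff_pos (n+1)
    set d : ℝ := p.coeff (n+1) with hd
    set q : Polynomial ℝ := c • p - d • Rp (n+1) with hq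
    have hqdeg : q.natDegree ≤ n := by
      rw [natDegree_le_iff_coeff_eq_zero]
      intro m hm
      rw [hq]
      simp only [coeff_sub, coeff_smul, smul_eq_mul]
      rcases eq_or_lt_of_le (Nat.succ_le_of_lt hm) with h | h
      · rw [← h]
        ring
      · have h1 : p.coeff m = 0 := coeff_eq_zero_of_natDegree_lt (by omega)
        have h2 : (Rp (n+1)).coeff m = 0 :=
          coeff_eq_zero_of_natDegree_lt (by rw [Rp_natDegree]; omega)
        rw [h1, h2]; ring
    have hqint : ∀ k, k ≤ n → (∫ x in (-1:ℝ)..1, q.eval x * (Rp k).eval x) = 0 := by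
      intro k hk
      have e1 : ∀ x, q.eval x * (Rp k).eval x
          = c * (p.eval x * (Rp k).eval x) - d * ((Rp k).eval x * (Rp (n+1)).eval x) := by
        intro x; rw [hq]; simp only [eval_sub, eval_smul, smul_eq_mul]; ring
      rw [intervalIntegral.integral_congr (g := fun x =>
          c * (p.eval x * (Rp k).eval x) - d * ((Rp k).eval x * (Rp (n+1)).eval x))
          (fun x _ => e1 x)]
      erw [intervalIntegral.integral_sub
        ((continuous_const.mul (p.continuous.mul (Rp k).continuous)).intervalIntegrable _ _)
        ((continuous_const.mul ((Rp k).continuous.mul (Rp (n+1)).continuous)).intervalIntegrable _ _),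
        intervalIntegral.integral_const_mul, intervalIntegral.integral_const_mul, hint k (by omega),
        OL (Rp k) (n+1) (by rw [Rp_natDegree]; omega)]
      ring
    have hq0 : q = 0 := ih q hqdeg hqint
    have heq : c • p = d • Rp (n+1) := by
      have := sub_eq_zero.mp (hq ▸ hq0 : c • p - d • Rp (n+1) = 0)
      exact this
    have hval := congrArg (fun r : Polynomial ℝ =>
      ∫ x in (-1:ℝ)..1, r.eval x * (Rp (n+1)).eval x) heq
    simp only [eval_smul, smul_eq_mul] at hval
    simp only [mul_assoc] at hval
    rw [intervalIntegral.integral_const_mul, intervalIntegral.integral_const_mul, hint (n+1) le_rfl, mul_zero] at hval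
    have hNpos := Npos (n+1)
    have hd0 : d = 0 := by
      rcases mul_eq_zero.mp hval.symm with h | h
      · exact h
      · exact absurd h (by rw [← Nn]; exact ne_of_gt hNpos)
    rw [hd0, zero_smul] at heq
    rcases smul_eq_zero.mp heq with h | h
    · exact absurd h (ne_of_gt hcpos)
    · exact h

lemma kappa_fact (n : ℕ) : (n.factorial : ℝ) * ((2*n).descFactorial n : ℝ) = ((2*n).factorial : ℝ) := by
  have := Nat.factorial_mul_descFactorial (show n ≤ 2*n by omega)
  have h2 : 2*n - n = n := by omega
  rw [h2] at this
  exact_mod_cast this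

lemma kappa_pos (n : ℕ) : (0:ℝ) < ((2*n).descFactorial n : ℝ) := by
  have : (2*n).descFactorial n ≠ 0 := by
    rw [Ne, Nat.descFactorial_eq_zero_iff_lt]; omega
  exact_mod_cast Nat.pos_of_ne_zero this

lemma kappa_ratio (n : ℕ) :
    (((2*n).descFactorial n : ℝ)) / (((2*(n+1)).descFactorial (n+1) : ℝ))
      = 1/(2*(2*(n:ℝ)+1)) := by
  have h1 := kappa_fact n
  have h2 := kappa_fact (n+1)
  have hfacpos : ∀ m : ℕ, (0:ℝ) < (m.factorial : ℝ) := fun m => by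
    exact_mod_cast Nat.factorial_pos m
  have hf1 : (((n+1).factorial : ℕ) : ℝ) = ((n:ℝ)+1) * (n.factorial : ℝ) := by
    rw [Nat.factorial_succ]; push_cast; ring
  have hf2 : (((2*(n+1)).factorial : ℕ) : ℝ)
      = (2*(n:ℝ)+2) * (2*(n:ℝ)+1) * ((2*n).factorial : ℝ) := by
    have h : 2*(n+1) = (2*n+1)+1 := by ring
    rw [h, Nat.factorial_succ, Nat.factorial_succ]; push_cast; ring
  rw [hf1, hf2] at h2
  have c1 := hfacpos n
  have c2 := hfacpos (2*n)
  have c3 := kappa_pos n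
  have c4 := kappa_pos (n+1)
  have c5 : (0:ℝ) < 2*(n:ℝ)+1 := by positivity
  have c6 : (0:ℝ) < (n:ℝ)+1 := by positivity
  have hκ : (((2*(n+1)).descFactorial (n+1) : ℝ))
      = 2*(2*(n:ℝ)+1) * (((2*n).descFactorial n : ℝ)) := by
    have hne : ((n:ℝ)+1) * (n.factorial : ℝ) ≠ 0 := by positivity
    refine mul_left_cancel₀ hne ?_
    linear_combination h2 - (2*(2*(n:ℝ)+1)*((n:ℝ)+1))*h1
  rw [hκ]
  rw [div_eq_div_iff (by positivity) (by positivity)]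
  ring

lemma TRval (n : ℕ) : (∫ x in (-1:ℝ)..1, x * ((Rp n).eval x * (Rp (n+1)).eval x))
    = (((2*n).descFactorial n : ℝ) / (((2*(n+1)).descFactorial (n+1)) : ℝ)) * Nn (n+1) := by
  set κ0 : ℝ := ((2*n).descFactorial n : ℝ) with hκ0
  set κ1 : ℝ := ((2*(n+1)).descFactorial (n+1) : ℝ) with hκ1
  have hκ1pos : 0 < κ1 := kappa_pos (n+1)
  set r : Polynomial ℝ := C κ1 * (X * Rp n) - C κ0 * Rp (n+1) with hr
  have hrdeg : r.natDegree ≤ n := by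
    rw [natDegree_le_iff_coeff_eq_zero]
    intro m hm
    obtain ⟨m', rfl⟩ : ∃ m', m = m' + 1 := ⟨m - 1, by omega⟩
    rw [hr]
    simp only [coeff_sub, coeff_C_mul, coeff_X_mul]
    rcases eq_or_lt_of_le (show n ≤ m' by omega) with h | h
    · subst h
      rw [Rp_coeff, Rp_coeff, ← hκ0, ← hκ1]
      ring
    · rw [coeff_eq_zero_of_natDegree_lt (by rw [Rp_natDegree]; omega),
        coeff_eq_zero_of_natDegree_lt (by rw [Rp_natDegree]; omega)]
      ring
  have h0 := OL r (n+1) (by omega)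
  have e1 : ∀ x : ℝ, r.eval x * (Rp (n+1)).eval x
      = κ1 * (x * ((Rp n).eval x * (Rp (n+1)).eval x))
        - κ0 * ((Rp (n+1)).eval x * (Rp (n+1)).eval x) := by
    intro x
    rw [hr]
    simp only [eval_sub, eval_mul, eval_C, eval_X]
    ring
  rw [intervalIntegral.integral_congr (g := fun x =>
      κ1 * (x * ((Rp n).eval x * (Rp (n+1)).eval x))
        - κ0 * ((Rp (n+1)).eval x * (Rp (n+1)).eval x)) (fun x _ => e1 x)] at h0
  rw [intervalIntegral.integral_sub (f := fun x => κ1 * (x * ((Rp n).eval x * (Rp (n+1)).eval x)))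
    (g := fun x => κ0 * ((Rp (n+1)).eval x * (Rp (n+1)).eval x))
    ((continuous_const.mul (continuous_id'.mul ((Rp n).continuous.mul (Rp (n+1)).continuous))).intervalIntegrable _ _)
    ((continuous_const.mul ((Rp (n+1)).continuous.mul (Rp (n+1)).continuous)).intervalIntegrable _ _),
    intervalIntegral.integral_const_mul, intervalIntegral.integral_const_mul] at h0
  rw [← Nn] at h0
  rw [div_mul_eq_mul_div, eq_div_iff (ne_of_gt hκ1pos)]
  have : (∫ x in (-1:ℝ)..1, x * ((Rp n).eval x * (Rp (n+1)).eval x)) * κ1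
      = κ1 * ∫ x in (-1:ℝ)..1, x * ((Rp n).eval x * (Rp (n+1)).eval x) := by ring
  rw [this]
  linarith

lemma TRdiag (n : ℕ) : (∫ x in (-1:ℝ)..1, x * ((Rp n).eval x * (Rp n).eval x)) = 0 := by
  have hsq : ((-1:ℝ)^n) * ((-1:ℝ)^n) = 1 := by
    rw [← pow_add, ← two_mul, pow_mul]; norm_num
  refine odd_integral _ (fun x => ?_)
    ((continuous_id'.mul ((Rp n).continuous.mul (Rp n).continuous)).intervalIntegrable _ _)
  show (-x) * ((Rp n).eval (-x) * (Rp n).eval (-x)) = -(x * ((Rp n).eval x * (Rp n).eval x))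
  rw [Rp_parity]
  linear_combination (-(x * (Rp n).eval x * (Rp n).eval x)) * hsq



/-- the discrete wave equation for the coefficients
`f i j = ∫_0^1 p̂_i(t) p̂_j(2t-1) dt` built from the orthonormal Legendre
polynomials. -/
theorem stmt_1
    (P : ℕ → Polynomial ℝ)
    (hdeg : ∀ n, (P n).natDegree = n)
    (hlead : ∀ n, 0 < (P n).leadingCoeff)
    (horth : ∀ k l, (∫ t in (-1:ℝ)..1, (P k).eval t * (P l).eval t) =
      if k = l then 1 else 0)
    (f : ℕ → ℕ → ℝ)
    (hf : ∀ i j, f i j = ∫ t in (0:ℝ)..1, (P i).eval t * (P j).eval (2 * t - 1)) :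
    ∀ i j : ℕ,
      ((j : ℝ) + 1) / Real.sqrt ((2 * (j : ℝ) + 1) * (2 * (j : ℝ) + 3)) * f i (j + 1)
        + f i j
        + (j : ℝ) / Real.sqrt ((2 * (j : ℝ) - 1) * (2 * (j : ℝ) + 1)) * f i (j - 1)
      = 2 * ((i : ℝ) + 1) / Real.sqrt ((2 * (i : ℝ) + 1) * (2 * (i : ℝ) + 3)) * f (i + 1) j
        + 2 * (i : ℝ) / Real.sqrt ((2 * (i : ℝ) - 1) * (2 * (i : ℝ) + 1)) * f (i - 1) j := by
  have hsqrtpos : ∀ m : ℕ, 0 < Real.sqrt (Nn m) := fun m => Real.sqrt_pos.mpr (Npos m)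
  -- uniqueness: P n is the normalized Rodrigues polynomial
  have hrp : ∀ n, P n = (Real.sqrt (Nn n))⁻¹ • Rp n := by
    intro n
    induction n using Nat.strong_induction_on with
    | _ n IH =>
    have hRPk : ∀ k, k < n → Rp k = (Real.sqrt (Nn k)) • P k := by
      intro k hk
      rw [IH k hk, smul_smul, mul_inv_cancel₀ (ne_of_gt (hsqrtpos k)), one_smul]
    have horthR : ∀ k, k < n → (∫ x in (-1:ℝ)..1, (P n).eval x * (Rp k).eval x) = 0 := by
      intro k hk
      rw [intervalIntegral.integral_congr (g := fun x =>
        Real.sqrt (Nn k) * ((P n).eval x * (P k).eval x)) (fun x _ => by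
          rw [hRPk k hk]; simp only [eval_smul, smul_eq_mul]; ring)]
      rw [intervalIntegral.integral_const_mul, horth n k, if_neg (by omega), mul_zero]
    set c : ℝ := ∫ x in (-1:ℝ)..1, (P n).eval x * (Rp n).eval x with hc
    set p : Polynomial ℝ := Nn n • P n - c • Rp n with hp
    have hpdeg : p.natDegree ≤ n := by
      refine le_trans (natDegree_sub_le _ _) (max_le ?_ ?_)
      · exact le_trans (natDegree_smul_le _ _) (le_of_eq (hdeg n))
      · exact le_trans (natDegree_smul_le _ _) (le_of_eq (Rp_natDegree n))
    have hpint : ∀ k, k ≤ n → (∫ x in (-1:ℝ)..1, p.eval x * (Rp k).eval x) = 0 := by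
      intro k hk
      rw [intervalIntegral.integral_congr (g := fun x =>
        Nn n * ((P n).eval x * (Rp k).eval x) - c * ((Rp k).eval x * (Rp n).eval x))
        (fun x _ => by rw [hp]; simp only [eval_sub, eval_smul, smul_eq_mul]; ring)]
      rw [intervalIntegral.integral_sub (f := fun x => Nn n * ((P n).eval x * (Rp k).eval x))
        (g := fun x => c * ((Rp k).eval x * (Rp n).eval x))
        ((continuous_const.mul ((P n).continuous.mul (Rp k).continuous)).intervalIntegrable _ _)
        ((continuous_const.mul ((Rp k).continuous.mul (Rp n).continuous)).intervalIntegrable _ _),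
        intervalIntegral.integral_const_mul, intervalIntegral.integral_const_mul]
      rcases eq_or_lt_of_le hk with h | h
      · subst h
        rw [← hc, ← Nn]
        ring
      · rw [horthR k h, OL (Rp k) n (by rw [Rp_natDegree]; omega), mul_zero, mul_zero, sub_zero]
    have hp0 : p = 0 := span_zero n p hpdeg hpint
    have heq : Nn n • P n = c • Rp n := sub_eq_zero.mp (hp ▸ hp0)
    have hNne : Nn n ≠ 0 := ne_of_gt (Npos n)
    set d : ℝ := (Nn n)⁻¹ * c with hd
    have hPn : P n = d • Rp n := by
      rw [hd, ← smul_smul, ← heq, smul_smul, inv_mul_cancel₀ hNne, one_smul]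
    have hnorm : d^2 * Nn n = 1 := by
      have h1 := horth n n
      rw [if_pos rfl] at h1
      rw [intervalIntegral.integral_congr (g := fun x =>
        (d*d) * ((Rp n).eval x * (Rp n).eval x)) (fun x _ => by
          rw [hPn]; simp only [eval_smul, smul_eq_mul]; ring),
        intervalIntegral.integral_const_mul, ← Nn] at h1
      rw [pow_two]
      exact h1
    have hdpos : 0 < d := by
      have h1 := hlead n
      rw [Polynomial.leadingCoeff, hdeg n, hPn, coeff_smul, smul_eq_mul] at h1
      nlinarith [Rp_coeff_pos n, h1]
    have hdval : d = (Real.sqrt (Nn n))⁻¹ := by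
      have hsq : d^2 = ((Real.sqrt (Nn n))⁻¹)^2 := by
        rw [← Real.sqrt_inv, Real.sq_sqrt (inv_nonneg.mpr (le_of_lt (Npos n)))]
        rw [eq_comm, inv_eq_iff_eq_inv, eq_comm, inv_eq_one_div,
          div_eq_iff (by positivity : (d:ℝ)^2 ≠ 0)]
        linear_combination -hnorm
      calc d = Real.sqrt (d^2) := (Real.sqrt_sq (le_of_lt hdpos)).symm
        _ = Real.sqrt (((Real.sqrt (Nn n))⁻¹)^2) := by rw [hsq]
        _ = (Real.sqrt (Nn n))⁻¹ := Real.sqrt_sq (by positivity)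
    rw [hPn, hdval]
  -- derived facts
  have hRP : ∀ k, Rp k = (Real.sqrt (Nn k)) • P k := by
    intro k
    rw [hrp k, smul_smul, mul_inv_cancel₀ (ne_of_gt (hsqrtpos k)), one_smul]
  -- T m k := ∫ x * (P m * P k)
  have hTlow : ∀ m k : ℕ, k + 1 < m →
      (∫ x in (-1:ℝ)..1, x * ((P m).eval x * (P k).eval x)) = 0 := by
    intro m k hk
    have hXdeg : (X * P k).natDegree < m := by
      refine lt_of_le_of_lt (natDegree_mul_le) ?_
      rw [natDegree_X, hdeg k]
      omega
    have h0 := OL (X * P k) m hXdeg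
    rw [intervalIntegral.integral_congr (g := fun x =>
      (Real.sqrt (Nn m))⁻¹ * ((X * P k).eval x * (Rp m).eval x)) (fun x _ => by
        rw [hrp m]; simp only [eval_smul, eval_mul, eval_X, smul_eq_mul]; ring),
      intervalIntegral.integral_const_mul, h0, mul_zero]
  have hTdiag : ∀ m : ℕ,
      (∫ x in (-1:ℝ)..1, x * ((P m).eval x * (P m).eval x)) = 0 := by
    intro m
    rw [intervalIntegral.integral_congr (g := fun x =>
      ((Real.sqrt (Nn m))⁻¹ * (Real.sqrt (Nn m))⁻¹) * (x * ((Rp m).eval x * (Rp m).eval x)))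
      (fun x _ => by rw [hrp m]; simp only [eval_smul, smul_eq_mul]; ring),
      intervalIntegral.integral_const_mul, TRdiag, mul_zero]
  have hTsucc : ∀ m : ℕ,
      (∫ x in (-1:ℝ)..1, x * ((P m).eval x * (P (m+1)).eval x))
        = ((m:ℝ)+1) / Real.sqrt ((2*(m:ℝ)+1)*(2*(m:ℝ)+3)) := by
    intro m
    have hval : (∫ x in (-1:ℝ)..1, x * ((P m).eval x * (P (m+1)).eval x))
        = ((Real.sqrt (Nn m))⁻¹ * (Real.sqrt (Nn (m+1)))⁻¹) *
          ((1/(2*(2*(m:ℝ)+1))) * Nn (m+1)) := by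
      rw [intervalIntegral.integral_congr (g := fun x =>
        ((Real.sqrt (Nn m))⁻¹ * (Real.sqrt (Nn (m+1)))⁻¹) *
          (x * ((Rp m).eval x * (Rp (m+1)).eval x))) (fun x _ => by
          rw [hrp m, hrp (m+1)]; simp only [eval_smul, smul_eq_mul]; ring),
        intervalIntegral.integral_const_mul, TRval, kappa_ratio]
    rw [hval]
    -- now pure algebra with square roots
    have hA : (0:ℝ) < 2*(m:ℝ)+1 := by positivity
    have hB : (0:ℝ) < 2*(m:ℝ)+3 := by positivity
    have hNm := Npos m
    have hNm1 := Npos (m+1)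
    have hLpos : 0 ≤ ((Real.sqrt (Nn m))⁻¹ * (Real.sqrt (Nn (m+1)))⁻¹) *
        ((1/(2*(2*(m:ℝ)+1))) * Nn (m+1)) := by
      have := hsqrtpos m
      have := hsqrtpos (m+1)
      positivity
    have hRpos : 0 ≤ ((m:ℝ)+1) / Real.sqrt ((2*(m:ℝ)+1)*(2*(m:ℝ)+3)) := by
      have : 0 < Real.sqrt ((2*(m:ℝ)+1)*(2*(m:ℝ)+3)) := Real.sqrt_pos.mpr (by positivity)
      positivity
    have hsq : (((Real.sqrt (Nn m))⁻¹ * (Real.sqrt (Nn (m+1)))⁻¹) *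
        ((1/(2*(2*(m:ℝ)+1))) * Nn (m+1)))^2
        = (((m:ℝ)+1) / Real.sqrt ((2*(m:ℝ)+1)*(2*(m:ℝ)+3)))^2 := by
      have e1 : (Real.sqrt (Nn m))^2 = Nn m := Real.sq_sqrt (le_of_lt hNm)
      have e2 : (Real.sqrt (Nn (m+1)))^2 = Nn (m+1) := Real.sq_sqrt (le_of_lt hNm1)
      have e3 : (Real.sqrt ((2*(m:ℝ)+1)*(2*(m:ℝ)+3)))^2 = (2*(m:ℝ)+1)*(2*(m:ℝ)+3) :=
        Real.sq_sqrt (by positivity)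
      have hNr := Nrec m
      have hs1 := ne_of_gt (hsqrtpos m)
      have hs2 := ne_of_gt (hsqrtpos (m+1))
      have hs3 : Real.sqrt ((2*(m:ℝ)+1)*(2*(m:ℝ)+3)) ≠ 0 :=
        ne_of_gt (Real.sqrt_pos.mpr (by positivity))
      simp only [mul_pow, inv_pow, div_pow, one_pow]
      rw [e1, e2, e3, hNr]
      have hNmne := ne_of_gt hNm
      field_simp
    calc ((Real.sqrt (Nn m))⁻¹ * (Real.sqrt (Nn (m+1)))⁻¹) *
        ((1/(2*(2*(m:ℝ)+1))) * Nn (m+1))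
        = Real.sqrt ((((Real.sqrt (Nn m))⁻¹ * (Real.sqrt (Nn (m+1)))⁻¹) *
            ((1/(2*(2*(m:ℝ)+1))) * Nn (m+1)))^2) := (Real.sqrt_sq hLpos).symm
      _ = Real.sqrt ((((m:ℝ)+1) / Real.sqrt ((2*(m:ℝ)+1)*(2*(m:ℝ)+3)))^2) := by rw [hsq]
      _ = ((m:ℝ)+1) / Real.sqrt ((2*(m:ℝ)+1)*(2*(m:ℝ)+3)) := Real.sqrt_sq hRpos
  -- the master three-term identity
  have main : ∀ (m : ℕ) (am bm : ℝ),
      (∫ x in (-1:ℝ)..1, x * ((P m).eval x * (P (m+1)).eval x)) = am →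
      (∫ x in (-1:ℝ)..1, x * ((P m).eval x * (P (m-1)).eval x)) = bm →
      (m = 0 → bm = 0) →
      ∀ x : ℝ, x * (P m).eval x = am * (P (m+1)).eval x + bm * (P (m-1)).eval x := by
    intro m am bm ham hbm hb0
    have i1 : ∀ a b : ℕ, IntervalIntegrable
        (fun x => x * ((P a).eval x * (P b).eval x)) volume (-1:ℝ) 1 :=
      fun a b => (continuous_id'.mul ((P a).continuous.mul (P b).continuous)).intervalIntegrable _ _
    have i2 : ∀ (c:ℝ) (a b : ℕ), IntervalIntegrable
        (fun x => c * ((P a).eval x * (P b).eval x)) volume (-1:ℝ) 1 :=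
      fun c a b => (continuous_const.mul ((P a).continuous.mul (P b).continuous)).intervalIntegrable _ _
    set q : Polynomial ℝ := X * P m - am • P (m+1) - bm • P (m-1) with hq
    have hqdeg : q.natDegree ≤ m+1 := by
      refine le_trans (natDegree_sub_le _ _)
        (max_le (le_trans (natDegree_sub_le _ _) (max_le ?_ ?_)) ?_)
      · exact le_trans natDegree_mul_le (by rw [natDegree_X, hdeg]; omega)
      · exact le_trans (natDegree_smul_le _ _) (le_of_eq (hdeg (m+1)))
      · exact le_trans (natDegree_smul_le _ _) (by rw [hdeg]; omega)
    have hqint : ∀ k, k ≤ m+1 → (∫ x in (-1:ℝ)..1, q.eval x * (Rp k).eval x) = 0 := by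
      intro k hk
      have hinner : (∫ x in (-1:ℝ)..1, q.eval x * (P k).eval x) = 0 := by
        rw [intervalIntegral.integral_congr (g := fun x =>
          x * ((P m).eval x * (P k).eval x)
            - am * ((P (m+1)).eval x * (P k).eval x)
            - bm * ((P (m-1)).eval x * (P k).eval x)) (fun x _ => by
            rw [hq]; simp only [eval_sub, eval_mul, eval_smul, eval_X, smul_eq_mul]; ring),
          intervalIntegral.integral_sub ((i1 m k).sub (i2 am (m+1) k)) (i2 bm (m-1) k),
          intervalIntegral.integral_sub (i1 m k) (i2 am (m+1) k),
          intervalIntegral.integral_const_mul, intervalIntegral.integral_const_mul]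
        rcases (by omega : k = m+1 ∨ k = m ∨ (1 ≤ m ∧ k = m-1) ∨ k+1 < m) with h | h | ⟨hm1, h⟩ | h
        · subst h
          rw [ham, horth, horth, if_pos rfl, if_neg (by omega)]
          ring
        · subst h
          rw [hTdiag k, horth, horth, if_neg (by omega)]
          rcases Nat.eq_zero_or_pos k with h0 | h0
          · rw [if_pos (by omega), hb0 h0]
            ring
          · rw [if_neg (by omega)]
            ring
        · subst h
          rw [hbm, horth, horth, if_pos rfl, if_neg (by omega)]
          ring
        · rw [hTlow m k (by omega), horth, horth, if_neg (by omega), if_neg (by omega)]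
          ring
      rw [intervalIntegral.integral_congr (g := fun x =>
        Real.sqrt (Nn k) * (q.eval x * (P k).eval x)) (fun x _ => by
          rw [hRP k]; simp only [eval_smul, smul_eq_mul]; ring),
        intervalIntegral.integral_const_mul, hinner, mul_zero]
    have hq0 : q = 0 := span_zero (m+1) q hqdeg hqint
    intro x
    have he := congrArg (eval x) (hq.symm.trans hq0)
    simp only [eval_sub, eval_mul, eval_smul, eval_X, smul_eq_mul, eval_zero] at he
    linarith
  -- the identity with explicit coefficients
  have hID : ∀ (m : ℕ) (x : ℝ), x * (P m).eval x
      = (((m:ℝ)+1)/Real.sqrt ((2*(m:ℝ)+1)*(2*(m:ℝ)+3))) * (P (m+1)).eval x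
        + ((m:ℝ)/Real.sqrt ((2*(m:ℝ)-1)*(2*(m:ℝ)+1))) * (P (m-1)).eval x := by
    intro m
    cases m with
    | zero =>
      intro x
      have h := main 0 ((((0:ℕ):ℝ)+1)/Real.sqrt ((2*((0:ℕ):ℝ)+1)*(2*((0:ℕ):ℝ)+3))) 0
        (hTsucc 0) (by simpa using hTdiag 0) (fun _ => rfl) x
      rw [h]
      norm_num
    | succ m' =>
      intro x
      have e1 : (∫ x in (-1:ℝ)..1, x * ((P (m'+1)).eval x * (P (m'+1-1)).eval x))
          = ((m':ℝ)+1)/Real.sqrt ((2*(m':ℝ)+1)*(2*(m':ℝ)+3)) := by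
        rw [show m'+1-1 = m' from rfl]
        rw [intervalIntegral.integral_congr (g := fun x =>
          x * ((P m').eval x * (P (m'+1)).eval x)) (fun x _ => by ring)]
        exact hTsucc m'
      have h := main (m'+1) _ _ (hTsucc (m'+1)) e1 (fun h => absurd h (by omega)) x
      have c2 : (((m'+1:ℕ)):ℝ)/Real.sqrt ((2*((m'+1:ℕ):ℝ)-1)*(2*((m'+1:ℕ):ℝ)+1))
          = ((m':ℝ)+1)/Real.sqrt ((2*(m':ℝ)+1)*(2*(m':ℝ)+3)) := by
        push_cast
        rw [show 2*((m':ℝ)+1)-1 = 2*m'+1 from by ring, show 2*((m':ℝ)+1)+1 = 2*(m':ℝ)+3 from by ring]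
      rw [h, c2]
  -- final assembly
  intro i j
  have iint : ∀ (a b : ℕ), IntervalIntegrable
      (fun t => (P a).eval t * (P b).eval (2*t-1)) volume (0:ℝ) 1 :=
    fun a b => ((P a).continuous.mul ((P b).continuous.comp
      ((continuous_const.mul continuous_id').sub continuous_const : Continuous fun t : ℝ => 2*t-1))).intervalIntegrable _ _
  have iintc : ∀ (c : ℝ) (a b : ℕ), IntervalIntegrable
      (fun t => c * ((P a).eval t * (P b).eval (2*t-1))) volume (0:ℝ) 1 :=
    fun c a b => (continuous_const.mul ((P a).continuous.mul ((P b).continuous.comp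
      ((continuous_const.mul continuous_id').sub continuous_const : Continuous fun t : ℝ => 2*t-1)))).intervalIntegrable _ _
  rw [hf i (j+1), hf i j, hf i (j-1), hf (i+1) j, hf (i-1) j]
  have hL : (((j:ℝ)+1)/Real.sqrt ((2*(j:ℝ)+1)*(2*(j:ℝ)+3)))
        * (∫ t in (0:ℝ)..1, (P i).eval t * (P (j+1)).eval (2*t-1))
      + (∫ t in (0:ℝ)..1, (P i).eval t * (P j).eval (2*t-1))
      + ((j:ℝ)/Real.sqrt ((2*(j:ℝ)-1)*(2*(j:ℝ)+1)))
        * (∫ t in (0:ℝ)..1, (P i).eval t * (P (j-1)).eval (2*t-1))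
      = ∫ t in (0:ℝ)..1, 2*t*((P i).eval t * (P j).eval (2*t-1)) := by
    rw [← intervalIntegral.integral_const_mul, ← intervalIntegral.integral_const_mul,
      ← intervalIntegral.integral_add (iintc _ i (j+1)) (iint i j),
      ← intervalIntegral.integral_add ((iintc _ i (j+1)).add (iint i j)) (iintc _ i (j-1))]
    apply intervalIntegral.integral_congr
    intro t ht
    have h1 := hID j (2*t-1)
    simp only []
    linear_combination (-(P i).eval t) * h1
  have hR : 2*((i:ℝ)+1)/Real.sqrt ((2*(i:ℝ)+1)*(2*(i:ℝ)+3))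
        * (∫ t in (0:ℝ)..1, (P (i+1)).eval t * (P j).eval (2*t-1))
      + 2*(i:ℝ)/Real.sqrt ((2*(i:ℝ)-1)*(2*(i:ℝ)+1))
        * (∫ t in (0:ℝ)..1, (P (i-1)).eval t * (P j).eval (2*t-1))
      = ∫ t in (0:ℝ)..1, 2*t*((P i).eval t * (P j).eval (2*t-1)) := by
    rw [← intervalIntegral.integral_const_mul, ← intervalIntegral.integral_const_mul,
      ← intervalIntegral.integral_add (iintc _ (i+1) j) (iintc _ (i-1) j)]
    apply intervalIntegral.integral_congr
    intro t ht
    have h2 := hID i t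
    simp only []
    linear_combination (-2 * (P j).eval (2*t-1)) * h2
  exact hL.trans hR.symm
end

section
/- For nonnegative integers k and l, the series Σ_{i=0}^∞ f_{i,k} f_{i,l} converges and equals 0 if k ≠ l and equals 1/2 if k = l. -/
open MeasureTheory Set Submodule

attribute [local instance] MeasureTheory.Measure.Subtype.measureSpace

local notation "II" => Set.Icc (-1 : ℝ) 1

/-- A graded family of polynomials spans everything. -/
lemma span_top_of_natDegree_eq (P : ℕ → Polynomial ℝ)
    (hdeg : ∀ n, (P n).natDegree = n)
    (hlead : ∀ n, (P n).leadingCoeff ≠ 0) :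
    Submodule.span ℝ (Set.range P) = ⊤ := by
  rw [eq_top_iff]
  have H : ∀ n (q : Polynomial ℝ), q.natDegree ≤ n →
      q ∈ Submodule.span ℝ (Set.range P) := by
    intro n
    induction n with
    | zero =>
      intro q hq
      have h0 : (P 0).natDegree = 0 := hdeg 0
      have hne : (P 0).coeff 0 ≠ 0 := by
        have := hlead 0; rwa [Polynomial.leadingCoeff, h0] at this
      have hq0 : q = Polynomial.C (q.coeff 0) :=
        Polynomial.eq_C_of_natDegree_le_zero hq
      have hP0 : P 0 = Polynomial.C ((P 0).coeff 0) :=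
        Polynomial.eq_C_of_natDegree_le_zero (le_of_eq h0)
      have : (q.coeff 0 / (P 0).coeff 0) • P 0 = q := by
        conv_lhs => rw [hP0]
        rw [Polynomial.smul_C, smul_eq_mul, Polynomial.coeff_C_zero,
          div_mul_cancel₀ _ hne, ← hq0]
      rw [← this]
      exact Submodule.smul_mem _ _ (Submodule.subset_span ⟨0, rfl⟩)
    | succ n ih =>
      intro q hq
      set c := q.coeff (n + 1) / (P (n + 1)).leadingCoeff with hc
      have hPc : (P (n + 1)).coeff (n + 1) = (P (n + 1)).leadingCoeff := by
        rw [Polynomial.leadingCoeff, hdeg]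
      have key : (q - c • P (n + 1)).natDegree ≤ n := by
        rw [Polynomial.natDegree_le_iff_coeff_eq_zero]
        intro m hm
        rw [Polynomial.coeff_sub, Polynomial.coeff_smul]
        rcases eq_or_lt_of_le (Nat.succ_le_of_lt hm) with h | h
        · have hm1 : m = n + 1 := h.symm
          subst hm1
          rw [hPc, hc, smul_eq_mul, div_mul_cancel₀ _ (hlead (n + 1)), sub_self]
        · have h1 : q.coeff m = 0 :=
            Polynomial.coeff_eq_zero_of_natDegree_lt (lt_of_le_of_lt hq h)
          have h2 : (P (n + 1)).coeff m = 0 :=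
            Polynomial.coeff_eq_zero_of_natDegree_lt (by rw [hdeg]; exact h)
          simp [h1, h2]
      have hmem : c • P (n + 1) ∈ Submodule.span ℝ (Set.range P) :=
        Submodule.smul_mem _ _ (Submodule.subset_span ⟨n + 1, rfl⟩)
      have hq' : q = (q - c • P (n + 1)) + c • P (n + 1) := by ring
      rw [hq']
      exact Submodule.add_mem _ (ih _ key) hmem
  intro q _
  exact H q.natDegree q le_rfl

lemma inner_eq_integral {α : Type*} [MeasurableSpace α] {μ : Measure α}
    (f g : Lp ℝ 2 μ) {F G : α → ℝ} (hF : ⇑f =ᵐ[μ] F) (hG : ⇑g =ᵐ[μ] G) :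
    inner ℝ f g = ∫ x, F x * G x ∂μ := by
  rw [MeasureTheory.L2.inner_def]
  apply integral_congr_ae
  filter_upwards [hF, hG] with x h1 h2
  rw [h1, h2]
  simp [RCLike.inner_apply, starRingEnd_apply, mul_comm]

/-- The shifted polynomial, extended by zero. -/
noncomputable def gfun (P : ℕ → Polynomial ℝ) (j : ℕ) : ℝ → ℝ :=
  (Set.Icc (0:ℝ) 1).indicator (fun t => (P j).eval (2 * t - 1))

set_option maxHeartbeats 1000000 in
set_option synthInstance.maxHeartbeats 400000 in
/-- the series `Σ_i f_{i,k} f_{i,l}` converges and equals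
`0` for `k ≠ l` and `1/2` for `k = l`. -/
theorem stmt_4
    (P : ℕ → Polynomial ℝ)
    (hdeg : ∀ n, (P n).natDegree = n)
    (hlead : ∀ n, 0 < (P n).leadingCoeff)
    (horth : ∀ k l, (∫ t in (-1:ℝ)..1, (P k).eval t * (P l).eval t) =
      if k = l then 1 else 0)
    (f : ℕ → ℕ → ℝ)
    (hf : ∀ i j, f i j = ∫ t in (0:ℝ)..1, (P i).eval t * (P j).eval (2 * t - 1))
    (k l : ℕ) :
    HasSum (fun i : ℕ => f i k * f i l) (if k = l then 1 / 2 else 0) := by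
  classical
  haveI : IsFiniteMeasure (volume : Measure II) := by
    constructor
    rw [Measure.Subtype.volume_univ nullMeasurableSet_Icc]
    rw [Real.volume_Icc]
    exact ENNReal.ofReal_lt_top
  -- the elements of L² coming from the polynomials
  set e : ℕ → Lp ℝ 2 (volume : Measure II) :=
    fun i => ContinuousMap.toLp (E := ℝ) 2 volume ℝ ((P i).toContinuousMapOn II)
    with he
  have hecoe : ∀ i, ⇑(e i) =ᵐ[volume] fun x : II => (P i).eval ↑x := by
    intro i
    filter_upwards [ContinuousMap.coeFn_toLp (p := 2) (𝕜 := ℝ)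
      (volume : Measure II) ((P i).toContinuousMapOn II)] with x hx
    rw [hx]
    simp
  -- orthonormality
  have horth_e : Orthonormal ℝ e := by
    rw [orthonormal_iff_ite]
    intro i j
    rw [inner_eq_integral (e i) (e j) (hecoe i) (hecoe j)]
    rw [show (∫ x : II, (fun x : II => (P i).eval ↑x) x * (fun x : II => (P j).eval ↑x) x)
        = ∫ t in II, (P i).eval t * (P j).eval t from
      integral_subtype measurableSet_Icc (fun t => (P i).eval t * (P j).eval t)]
    rw [integral_Icc_eq_integral_Ioc,
      ← intervalIntegral.integral_of_le (by norm_num : (-1:ℝ) ≤ 1)]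
    exact horth i j
  -- density of the span
  have hPtop : Submodule.span ℝ (Set.range P) = ⊤ :=
    span_top_of_natDegree_eq P hdeg (fun n => (hlead n).ne')
  have hspan0 : (span ℝ (Set.range fun i =>
      (P i).toContinuousMapOn II)).topologicalClosure = ⊤ := by
    have h1 : span ℝ (Set.range fun i => (P i).toContinuousMapOn II)
        = Subalgebra.toSubmodule (polynomialFunctions II) := by
      have h2 : (Set.range fun i => (P i).toContinuousMapOn II)
          = ⇑(Polynomial.toContinuousMapOnAlgHom II).toLinearMap '' Set.range P := by
        rw [← Set.range_comp]; rfl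
      rw [h2, ← Submodule.map_span, hPtop, Submodule.map_top]
      ext x
      simp only [LinearMap.mem_range, Subalgebra.mem_toSubmodule]
      rw [← SetLike.mem_coe, polynomialFunctions_coe]
      exact Iff.rfl
    rw [h1]
    apply SetLike.ext'
    rw [Submodule.topologicalClosure_coe]
    have h3 : closure (polynomialFunctions II : Set C(II, ℝ)) = Set.univ := by
      rw [← Subalgebra.topologicalClosure_coe,
        polynomialFunctions_closure_eq_top (-1 : ℝ) 1]
      rfl
    simpa using h3
  have hspanLp : ⊤ ≤ (span ℝ (Set.range e)).topologicalClosure := by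
    refine le_of_eq (Eq.symm ?_)
    have hd := (ContinuousMap.toLp_denseRange ℝ (volume : Measure II) ℝ
      (p := 2) (by norm_num)).topologicalClosure_map_submodule hspan0
    rw [Submodule.map_span, ← Set.range_comp] at hd
    exact hd
  -- the Hilbert basis
  let b : HilbertBasis ℕ ℝ (Lp ℝ 2 (volume : Measure II)) :=
    HilbertBasis.mk horth_e hspanLp
  have hb : ∀ i, b i = e i := fun i => congrFun (HilbertBasis.coe_mk horth_e hspanLp) i
  -- the shifted polynomials, extended by zero, as elements of L²
  have hgmem : ∀ j, MemLp (fun x : II => gfun P j ↑x) 2 (volume : Measure II) := by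
    intro j
    have hcont : Continuous fun t : ℝ => (P j).eval (2 * t - 1) :=
      (P j).continuous_aeval.comp (by continuity)
    obtain ⟨C, hC⟩ := (isCompact_Icc (a := (0:ℝ)) (b := 1)).exists_bound_of_continuousOn
      hcont.continuousOn
    have hmeas : Measurable fun x : II => gfun P j ↑x :=
      (hcont.measurable.indicator measurableSet_Icc).comp measurable_subtype_coe
    refine MemLp.of_bound hmeas.aestronglyMeasurable (max C 0) (ae_of_all _ ?_)
    intro x
    by_cases hx : (x : ℝ) ∈ Set.Icc (0:ℝ) 1
    · rw [gfun, Set.indicator_of_mem hx]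
      exact le_max_of_le_left (hC _ hx)
    · rw [gfun, Set.indicator_of_notMem hx]
      simp
  set g : ℕ → Lp ℝ 2 (volume : Measure II) := fun j => (hgmem j).toLp _ with hg
  have hgcoe : ∀ j, ⇑(g j) =ᵐ[volume] fun x : II => gfun P j ↑x :=
    fun j => (hgmem j).coeFn_toLp
  -- cross inner products are the f i j
  have hcross : ∀ i j, inner ℝ (e i) (g j) = f i j := by
    intro i j
    rw [inner_eq_integral (e i) (g j) (hecoe i) (hgcoe j)]
    rw [show (∫ x : II, (fun x : II => (P i).eval ↑x) x * (fun x : II => gfun P j ↑x) x)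
        = ∫ t in II, (P i).eval t * gfun P j t from
      integral_subtype measurableSet_Icc (fun t => (P i).eval t * gfun P j t)]
    have hind : ∀ t : ℝ, (P i).eval t * gfun P j t
        = (Set.Icc (0:ℝ) 1).indicator
            (fun t => (P i).eval t * (P j).eval (2 * t - 1)) t := by
      intro t
      by_cases h : t ∈ Set.Icc (0:ℝ) 1
      · rw [gfun, Set.indicator_of_mem h, Set.indicator_of_mem h]
      · rw [gfun, Set.indicator_of_notMem h, Set.indicator_of_notMem h, mul_zero]
    simp_rw [hind]
    rw [setIntegral_indicator measurableSet_Icc]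
    rw [Set.inter_eq_self_of_subset_right
      (Set.Icc_subset_Icc (by norm_num) (by norm_num))]
    rw [integral_Icc_eq_integral_Ioc,
      ← intervalIntegral.integral_of_le (by norm_num : (0:ℝ) ≤ 1)]
    exact (hf i j).symm
  -- inner product of the g's
  have hGG : inner ℝ (g k) (g l) = if k = l then 1 / 2 else 0 := by
    rw [inner_eq_integral (g k) (g l) (hgcoe k) (hgcoe l)]
    rw [show (∫ x : II, (fun x : II => gfun P k ↑x) x * (fun x : II => gfun P l ↑x) x)
        = ∫ t in II, gfun P k t * gfun P l t from
      integral_subtype measurableSet_Icc (fun t => gfun P k t * gfun P l t)]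
    have hind : ∀ t : ℝ, gfun P k t * gfun P l t
        = (Set.Icc (0:ℝ) 1).indicator
            (fun t => (P k).eval (2 * t - 1) * (P l).eval (2 * t - 1)) t := by
      intro t
      by_cases h : t ∈ Set.Icc (0:ℝ) 1
      · rw [gfun, gfun, Set.indicator_of_mem h, Set.indicator_of_mem h,
          Set.indicator_of_mem h]
      · rw [gfun, gfun, Set.indicator_of_notMem h, Set.indicator_of_notMem h,
          Set.indicator_of_notMem h, mul_zero]
    simp_rw [hind]
    rw [setIntegral_indicator measurableSet_Icc]
    rw [Set.inter_eq_self_of_subset_right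
      (Set.Icc_subset_Icc (by norm_num) (by norm_num))]
    rw [integral_Icc_eq_integral_Ioc,
      ← intervalIntegral.integral_of_le (by norm_num : (0:ℝ) ≤ 1)]
    have hsubst := intervalIntegral.integral_comp_mul_sub
      (a := (0:ℝ)) (b := 1) (fun u => (P k).eval u * (P l).eval u)
      (two_ne_zero) 1
    norm_num at hsubst
    rw [hsubst, horth k l]
    split_ifs <;> norm_num
  -- conclude by Parseval
  have H := b.hasSum_inner_mul_inner (g k) (g l)
  rw [hGG] at H
  have Hfun : (fun i => inner ℝ (g k) (b i) * inner ℝ (b i) (g l))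
      = fun i => f i k * f i l := by
    funext i
    rw [hb i, real_inner_comm, hcross i k, hcross i l]
  rwa [Hfun] at H
end

section
/- Let λ > 0. For all nonnegative integers k and l, the series Σ_{i=0}^∞ f^{(λ)}_{i,k} f^{(λ)}_{i,l} converges and equals ∫_0^1 p̂_k^{(λ)}(2x−1) p̂_l^{(λ)}(2x−1) x^{2λ−1} ((1−x)/(1+x))^{λ−1/2} dx. -/
open MeasureTheory Set
open scoped NNReal ENNReal

lemma measRpowConst (c : ℝ) : Measurable (fun x : ℝ => x ^ c) :=
  measurable_of_continuousOn_compl_singleton 0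
    (fun x hx => (Real.continuousAt_rpow_const x c (Or.inl hx)).continuousWithinAt)

lemma betaInt {a b : ℝ} (ha : -1 < a) (hb : -1 < b) :
    IntegrableOn (fun t : ℝ => t ^ a * (1 - t) ^ b) (Set.Ioo 0 1) := by
  have h := Complex.betaIntegral_convergent (u := (a : ℂ) + 1) (v := (b : ℂ) + 1)
    (by simpa using by linarith) (by simpa using by linarith)
  rw [intervalIntegrable_iff_integrableOn_Ioo_of_le (by norm_num)] at h
  have h2 : IntegrableOn (fun t : ℝ => ((t : ℂ) ^ (a : ℂ) * (1 - (t : ℂ)) ^ (b : ℂ)).re)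
      (Set.Ioo 0 1) := by
    exact (by simpa only [add_sub_cancel_right] using h :
      IntegrableOn (fun x : ℝ => (x : ℂ) ^ (a : ℂ) * (1 - (x : ℂ)) ^ (b : ℂ)) (Set.Ioo 0 1)).re
  refine h2.congr_fun (fun t ht => ?_) measurableSet_Ioo
  have h1 : ((t : ℂ)) ^ (a : ℂ) = ((t ^ a : ℝ) : ℂ) := (Complex.ofReal_cpow ht.1.le a).symm
  have h2' : ((1 - (t : ℂ))) ^ (b : ℂ) = (((1 - t) ^ b : ℝ) : ℂ) := by
    rw [show (1 - (t : ℂ)) = (((1 - t : ℝ)) : ℂ) by push_cast; ring]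
    exact (Complex.ofReal_cpow (by linarith [ht.2]) b).symm
  beta_reduce
  rw [h1, h2', ← Complex.ofReal_mul, Complex.ofReal_re]

/-- Every polynomial is in the span of a degree-graded family. -/

lemma weightInt {c : ℝ} (hc : -1 < c) :
    IntegrableOn (fun t : ℝ => (1 - t ^ 2) ^ c) (Set.Ioo (-1 : ℝ) 1) := by
  have h1 : IntervalIntegrable (fun t : ℝ => t ^ c * (1 - t) ^ c) volume 0 1 := by
    rw [intervalIntegrable_iff_integrableOn_Ioo_of_le (by norm_num)]
    exact betaInt hc hc
  have h2 := (h1.comp_mul_left (c := (1/2 : ℝ))).comp_add_right 1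
  rw [show (0:ℝ) / (1/2) - 1 = -1 by norm_num, show (1:ℝ) / (1/2) - 1 = 1 by norm_num,
    intervalIntegrable_iff_integrableOn_Ioo_of_le (by norm_num)] at h2
  have h3 := h2.const_mul ((4:ℝ) ^ c)
  refine IntegrableOn.congr_fun h3 (fun x hx => ?_) measurableSet_Ioo
  obtain ⟨hx1, hx2⟩ := hx
  have e1 : (0:ℝ) ≤ 1/2 * (x+1) := by linarith
  have e2 : (0:ℝ) ≤ 1 - 1/2 * (x+1) := by linarith
  rw [← Real.mul_rpow e1 e2, ← Real.mul_rpow (by norm_num) (mul_nonneg e1 e2)]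
  congr 1
  ring

lemma polySpan (P : ℕ → Polynomial ℝ) (hdeg : ∀ n, (P n).natDegree = n)
    (hlead : ∀ n, (P n).leadingCoeff ≠ 0) :
    ∀ (n : ℕ) (q : Polynomial ℝ), q.natDegree ≤ n →
      q ∈ Submodule.span ℝ (Set.range P) := by
  intro n
  induction n with
  | zero =>
    intro q hq
    obtain ⟨cq, rfl⟩ := Polynomial.natDegree_eq_zero.mp (le_antisymm hq (Nat.zero_le _))
    obtain ⟨c0, hc0⟩ := Polynomial.natDegree_eq_zero.mp (hdeg 0)
    have hc0ne : c0 ≠ 0 := by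
      intro h; apply hlead 0; rw [← hc0, h]; simp
    have : cq • Polynomial.C cq = cq • ((cq / c0) • P 0) := by
      simp only [← hc0, Polynomial.smul_C, smul_eq_mul]; congr 1; field_simp
    have h2 : Polynomial.C cq = (cq / c0) • P 0 := by
      rw [← hc0, Polynomial.smul_C, smul_eq_mul]; field_simp
    rw [h2]
    exact Submodule.smul_mem _ _ (Submodule.subset_span ⟨0, rfl⟩)
  | succ n ih =>
    intro q hq
    by_cases h : q.natDegree ≤ n
    · exact ih q h
    · have hqd : q.natDegree = n + 1 := le_antisymm hq (not_le.mp h)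
      have hq0 : q ≠ 0 := by
        intro h0; rw [h0] at hqd; simp at hqd
      set cc : ℝ := q.leadingCoeff / (P (n + 1)).leadingCoeff with hcc
      have hccne : cc ≠ 0 := div_ne_zero (Polynomial.leadingCoeff_ne_zero.mpr hq0) (hlead _)
      have hdegP : (Polynomial.C cc * P (n + 1)).degree = q.degree := by
        rw [Polynomial.degree_C_mul hccne,
          Polynomial.degree_eq_natDegree hq0,
          Polynomial.degree_eq_natDegree (fun h0 => hlead (n+1) (by rw [h0]; simp)),
          hdeg, hqd]
      have hlc : (Polynomial.C cc * P (n + 1)).leadingCoeff = q.leadingCoeff := by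
        rw [Polynomial.leadingCoeff_mul, Polynomial.leadingCoeff_C, hcc]
        exact div_mul_cancel₀ _ (hlead _)
      have key : (q - Polynomial.C cc * P (n + 1)).natDegree ≤ n := by
        by_cases hz : q - Polynomial.C cc * P (n + 1) = 0
        · rw [hz]; simp
        · have := Polynomial.degree_sub_lt hdegP.symm hq0 hlc.symm
          have h2 := Polynomial.natDegree_lt_natDegree hz this
          omega
      have hdecomp : q = (q - Polynomial.C cc * P (n + 1)) + cc • P (n + 1) := by
        rw [Polynomial.smul_eq_C_mul]; ring
      rw [hdecomp]
      exact Submodule.add_mem _ (ih _ key)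
        (Submodule.smul_mem _ _ (Submodule.subset_span ⟨n + 1, rfl⟩))

lemma pointBound {c Cj p t : ℝ} (ht : t ∈ Set.Ioo (0:ℝ) 1) (hp : |p| ≤ Cj) :
    |(p * (t / (1 + t)) ^ c) ^ 2 * (1 - t ^ 2) ^ c| ≤
      (Cj ^ 2 * max 1 ((2:ℝ) ^ (-c))) * (t ^ (2 * c) * (1 - t) ^ c) := by
  obtain ⟨ht0, ht1⟩ := ht
  have h1t : (0:ℝ) < 1 + t := by linarith
  have hq : (0:ℝ) ≤ t / (1 + t) := (div_pos ht0 h1t).le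
  have h1t2 : (0:ℝ) ≤ 1 - t ^ 2 := by nlinarith
  have hB : (0:ℝ) < t ^ 2 * (1 - t) := mul_pos (by positivity) (by linarith)
  have lhs_eq : (p * (t / (1 + t)) ^ c) ^ 2 * (1 - t ^ 2) ^ c
      = p ^ 2 * (t ^ 2 * (1 - t) / (1 + t)) ^ c := by
    have e1 : (p * (t / (1 + t)) ^ c) ^ 2
        = p ^ 2 * ((t / (1 + t)) ^ c * (t / (1 + t)) ^ c) := by ring
    rw [e1, ← Real.mul_rpow hq hq, mul_assoc, ← Real.mul_rpow (mul_nonneg hq hq) h1t2]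
    congr 2
    field_simp
    ring
  have hBc : (t ^ 2 * (1 - t)) ^ c = t ^ (2 * c) * (1 - t) ^ c := by
    rw [Real.mul_rpow (by positivity) (by linarith), ← Real.rpow_natCast t 2,
      ← Real.rpow_mul ht0.le]
    norm_num
  have hmax : (t ^ 2 * (1 - t) / (1 + t)) ^ c
      ≤ max 1 ((2:ℝ) ^ (-c)) * (t ^ (2 * c) * (1 - t) ^ c) := by
    rw [← hBc]
    rcases le_or_gt 0 c with hc0 | hc0
    · calc (t ^ 2 * (1 - t) / (1 + t)) ^ c ≤ (t ^ 2 * (1 - t)) ^ c :=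
            Real.rpow_le_rpow (by positivity) (by rw [div_le_iff₀ h1t]; nlinarith) hc0
        _ ≤ max 1 ((2:ℝ) ^ (-c)) * (t ^ 2 * (1 - t)) ^ c :=
            le_mul_of_one_le_left (Real.rpow_nonneg hB.le _) (le_max_left _ _)
    · have h2 : t ^ 2 * (1 - t) / 2 ≤ t ^ 2 * (1 - t) / (1 + t) :=
        div_le_div_of_nonneg_left hB.le h1t (by linarith)
      calc (t ^ 2 * (1 - t) / (1 + t)) ^ c ≤ (t ^ 2 * (1 - t) / 2) ^ c :=
            Real.rpow_le_rpow_of_nonpos (by positivity) h2 hc0.le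
        _ = (2:ℝ) ^ (-c) * (t ^ 2 * (1 - t)) ^ c := by
            rw [Real.div_rpow hB.le (by norm_num), Real.rpow_neg (by norm_num)]
            rw [div_eq_mul_inv, mul_comm]
        _ ≤ max 1 ((2:ℝ) ^ (-c)) * (t ^ 2 * (1 - t)) ^ c :=
            mul_le_mul_of_nonneg_right (le_max_right _ _) (Real.rpow_nonneg hB.le _)
  have hCj : 0 ≤ Cj := le_trans (abs_nonneg p) hp
  rw [lhs_eq, abs_of_nonneg (by positivity)]
  calc p ^ 2 * (t ^ 2 * (1 - t) / (1 + t)) ^ c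
      ≤ Cj ^ 2 * (max 1 ((2:ℝ) ^ (-c)) * (t ^ (2 * c) * (1 - t) ^ c)) := by
        apply mul_le_mul _ hmax (Real.rpow_nonneg (by positivity) _) (by positivity)
        calc p ^ 2 = |p| ^ 2 := (sq_abs p).symm
          _ ≤ Cj ^ 2 := by exact pow_le_pow_left₀ (abs_nonneg p) hp 2
    _ = (Cj ^ 2 * max 1 ((2:ℝ) ^ (-c))) * (t ^ (2 * c) * (1 - t) ^ c) := by ring

set_option maxHeartbeats 1000000 in
/-- for `λ > 0`, the series `Σ_i f^{(λ)}_{i,k} f^{(λ)}_{i,l}`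
converges to
`∫_0^1 p̂_k^{(λ)}(2x-1) p̂_l^{(λ)}(2x-1) x^{2λ-1} ((1-x)/(1+x))^{λ-1/2} dx`. -/
theorem stmt_8
    (lam : ℝ) (hlam : lam > 0)
    (P : ℕ → Polynomial ℝ)
    (hdeg : ∀ n, (P n).natDegree = n)
    (hlead : ∀ n, 0 < (P n).leadingCoeff)
    (horth : ∀ k l, (∫ t in (-1:ℝ)..1,
        (P k).eval t * (P l).eval t * (1 - t ^ 2) ^ (lam - 1 / 2)) =
      if k = l then 1 else 0)
    (f : ℕ → ℕ → ℝ)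
    (hf : ∀ i j, f i j = ∫ t in (0:ℝ)..1,
      (P i).eval t * (P j).eval (2 * t - 1) * (t * (1 - t)) ^ (lam - 1 / 2))
    (k l : ℕ) :
    HasSum (fun i : ℕ => f i k * f i l)
      (∫ x in (0:ℝ)..1,
        (P k).eval (2 * x - 1) * (P l).eval (2 * x - 1) * x ^ (2 * lam - 1) *
          ((1 - x) / (1 + x)) ^ (lam - 1 / 2)) := by
  classical
  set c : ℝ := lam - 1/2 with hc
  have hc1 : (-1 : ℝ) < c := by rw [hc]; linarith
  have hc2 : (-1 : ℝ) < 2*c := by rw [hc]; linarith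
  set S : Set ℝ := Set.Ioo (-1 : ℝ) 1 with hS
  have hsub : Set.Ioo (0:ℝ) 1 ⊆ S := fun t ht => ⟨by linarith [ht.1], ht.2⟩
  set w : ℝ → ℝ≥0 := fun t => Real.toNNReal ((1 - t ^ 2) ^ c) with hw
  have hw_meas : Measurable w :=
    ((measRpowConst c).comp (measurable_const.sub (measurable_id.pow_const 2))).real_toNNReal
  set μ : Measure ℝ := (volume.restrict S).withDensity (fun t => (w t : ℝ≥0∞)) with hμ
  have hwInt : IntegrableOn (fun t : ℝ => (1 - t ^ 2) ^ c) S := weightInt hc1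
  have hfin : IsFiniteMeasure μ := by
    constructor
    rw [hμ, withDensity_apply _ MeasurableSet.univ, Measure.restrict_univ]
    calc ∫⁻ t, (w t : ℝ≥0∞) ∂(volume.restrict S)
        ≤ ∫⁻ t, ‖(1 - t ^ 2) ^ c‖ₑ ∂(volume.restrict S) :=
          lintegral_mono (fun t => Real.ofReal_le_enorm _)
      _ < ⊤ := hwInt.2
  -- conversion of μ-integrals to weighted Lebesgue integrals
  have key : ∀ φ : ℝ → ℝ, (∫ t, φ t ∂μ) = ∫ t in S, (1 - t ^ 2) ^ c * φ t := by
    intro φ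
    rw [hμ, integral_withDensity_eq_integral_smul hw_meas]
    refine setIntegral_congr_fun measurableSet_Ioo (fun t ht => ?_)
    have h0 : (0:ℝ) ≤ (1 - t ^ 2) ^ c :=
      Real.rpow_nonneg (by nlinarith [ht.1, ht.2] : (0:ℝ) ≤ 1 - t ^ 2) _
    simp only [hw, NNReal.smul_def, smul_eq_mul, Real.coe_toNNReal _ h0]
  have ae_S : ∀ᵐ t ∂μ, t ∈ S := by
    rw [hμ]
    exact (withDensity_absolutelyContinuous _ _).ae_le (ae_restrict_mem measurableSet_Ioo)
  -- polynomials are in L²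
  have memP : ∀ q : Polynomial ℝ, MemLp (fun t => q.eval t) 2 μ := by
    intro q
    obtain ⟨C, hC⟩ := (isCompact_Icc (a := (-1:ℝ)) (b := 1)).exists_bound_of_continuousOn
      (q.continuous_aeval.continuousOn)
    refine MemLp.of_bound (q.continuous_aeval.measurable.aestronglyMeasurable) C ?_
    filter_upwards [ae_S] with t ht
    exact hC t ⟨ht.1.le, ht.2.le⟩
  -- the functions G j
  set Gin : ℕ → ℝ → ℝ := fun j t => (P j).eval (2*t-1) * (t/(1+t)) ^ c with hGin
  set G : ℕ → ℝ → ℝ := fun j => (Set.Ioo (0:ℝ) 1).indicator (Gin j) with hG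
  have hPcomp : ∀ j : ℕ, Continuous (fun t : ℝ => (P j).eval (2*t-1)) := fun j =>
    (P j).continuous_aeval.comp (by continuity)
  have hGinmeas : ∀ j, Measurable (Gin j) := fun j =>
    ((hPcomp j).measurable).mul
      ((measRpowConst c).comp (measurable_id.div (measurable_const.add measurable_id)))
  have hGmeas : ∀ j, Measurable (G j) := fun j =>
    (hGinmeas j).indicator measurableSet_Ioo
  -- polynomial sup bounds on [-1,1]
  have bnd : ∀ j : ℕ, ∃ Cj : ℝ, ∀ x ∈ Set.Icc (-1:ℝ) 1, |(P j).eval x| ≤ Cj := fun j => by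
    obtain ⟨C, hC⟩ := (isCompact_Icc (a := (-1:ℝ)) (b := 1)).exists_bound_of_continuousOn
      ((P j).continuous_aeval.continuousOn)
    exact ⟨C, fun x hx => hC x hx⟩
  -- G j is in L²
  have memG : ∀ j, MemLp (G j) 2 μ := by
    intro j
    obtain ⟨Cj, hCj⟩ := bnd j
    rw [memLp_two_iff_integrable_sq (hGmeas j).aestronglyMeasurable, hμ,
      integrable_withDensity_iff hw_meas.coe_nnreal_ennreal
        (ae_of_all _ fun x => ENNReal.coe_lt_top)]
    have heq : (fun t => G j t ^ 2 * ((w t : ℝ≥0∞)).toReal)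
        = Set.indicator (Set.Ioo (0:ℝ) 1)
          (fun t => Gin j t ^ 2 * ((w t : ℝ≥0∞)).toReal) := by
      funext t
      by_cases ht : t ∈ Set.Ioo (0:ℝ) 1 <;>
        simp [hG, Set.indicator_of_mem, Set.indicator_of_notMem, ht]
    rw [heq, integrable_indicator_iff measurableSet_Ioo]
    unfold S at hsub
    rw [IntegrableOn, Measure.restrict_restrict measurableSet_Ioo,
      Set.inter_eq_self_of_subset_left hsub]
    -- now a genuine integrability estimate on (0,1)
    have hmaj : IntegrableOn
        (fun t : ℝ => (Cj ^ 2 * max 1 ((2:ℝ) ^ (-c))) * (t ^ (2*c) * (1-t) ^ c))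
        (Set.Ioo 0 1) := (betaInt hc2 hc1).const_mul _
    refine Integrable.mono hmaj
      (((hGinmeas j).pow_const 2).mul
        (hw_meas.coe_nnreal_ennreal.ennreal_toReal)).aestronglyMeasurable ?_
    filter_upwards [ae_restrict_mem measurableSet_Ioo] with t ht
    have hwt : ((w t : ℝ≥0∞)).toReal = (1 - t ^ 2) ^ c := by
      simp only [hw, ENNReal.coe_toReal]
      exact Real.coe_toNNReal _
        (Real.rpow_nonneg (by nlinarith [ht.1, ht.2, hsub ht] : (0:ℝ) ≤ 1 - t^2) _)
    have hb := pointBound (c := c) ht (hCj (2*t-1) ⟨by linarith [ht.1], by linarith [ht.2]⟩)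
    rw [Real.norm_eq_abs, Real.norm_eq_abs]
    calc |Gin j t ^ 2 * ((w t : ℝ≥0∞)).toReal|
        = |((P j).eval (2*t-1) * (t/(1+t)) ^ c) ^ 2 * (1 - t ^ 2) ^ c| := by
          rw [hwt]
      _ ≤ (Cj ^ 2 * max 1 ((2:ℝ) ^ (-c))) * (t ^ (2*c) * (1-t) ^ c) := hb
      _ ≤ |(Cj ^ 2 * max 1 ((2:ℝ) ^ (-c))) * (t ^ (2*c) * (1-t) ^ c)| := le_abs_self _
  -- Lp elements
  set e : ℕ → Lp ℝ 2 μ := fun i => (memP (P i)).toLp (fun t => (P i).eval t) with he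
  set g : ℕ → Lp ℝ 2 μ := fun j => (memG j).toLp (G j) with hgdef
  have ae_eq_e : ∀ i, ⇑(e i) =ᵐ[μ] fun t => (P i).eval t := fun i => MemLp.coeFn_toLp _
  have ae_eq_g : ∀ j, ⇑(g j) =ᵐ[μ] G j := fun j => MemLp.coeFn_toLp _
  -- generic inner product formula
  have inner_eq : ∀ (x y : Lp ℝ 2 μ) (φ ψ : ℝ → ℝ), (⇑x =ᵐ[μ] φ) → (⇑y =ᵐ[μ] ψ) →
      (inner ℝ x y : ℝ) = ∫ t, φ t * ψ t ∂μ := by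
    intro x y φ ψ hx hy
    rw [L2.inner_def]
    refine integral_congr_ae ?_
    filter_upwards [hx, hy] with t h1 h2
    rw [h1, h2]
    simp [RCLike.inner_apply, mul_comm]
  -- pushing an indicator through the set integral over S
  have ind_step : ∀ F : ℝ → ℝ, (∫ t in S, Set.indicator (Set.Ioo (0:ℝ) 1) F t)
      = ∫ t in Set.Ioo (0:ℝ) 1, F t := by
    intro F
    rw [hS, integral_indicator measurableSet_Ioo,
      Measure.restrict_restrict measurableSet_Ioo, Set.inter_eq_self_of_subset_left hsub]
  have ioo_eq : ∀ (a b : ℝ) (hab : a ≤ b) (F : ℝ → ℝ),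
      (∫ t in Set.Ioo a b, F t) = ∫ t in a..b, F t := by
    intro a b hab F
    rw [intervalIntegral.integral_of_le hab, integral_Ioc_eq_integral_Ioo]
  -- ⟪e i, g j⟫ = f i j
  have inner_e_g : ∀ i j, (inner ℝ (e i) (g j) : ℝ) = f i j := by
    intro i j
    rw [inner_eq _ _ _ _ (ae_eq_e i) (ae_eq_g j), key]
    have h1 : ∀ t, (1 - t^2)^c * ((P i).eval t * G j t)
        = Set.indicator (Set.Ioo (0:ℝ) 1)
            (fun t => (1-t^2)^c * ((P i).eval t * Gin j t)) t := by
      intro t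
      by_cases ht : t ∈ Set.Ioo (0:ℝ) 1 <;>
        simp [hG, Set.indicator_of_mem, Set.indicator_of_notMem, ht]
    calc (∫ t in S, (1 - t^2)^c * ((P i).eval t * G j t))
        = ∫ t in S, Set.indicator (Set.Ioo (0:ℝ) 1)
            (fun t => (1-t^2)^c * ((P i).eval t * Gin j t)) t :=
          integral_congr_ae (ae_of_all _ fun t => by
            simpa using congrArg (fun z => z) (h1 t))
      _ = ∫ t in Set.Ioo (0:ℝ) 1, (1-t^2)^c * ((P i).eval t * Gin j t) := ind_step _
      _ = ∫ t in Set.Ioo (0:ℝ) 1,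
            (P i).eval t * (P j).eval (2*t-1) * (t * (1-t))^c := by
          refine setIntegral_congr_fun measurableSet_Ioo (fun t ht => ?_)
          obtain ⟨ht0, ht1⟩ := ht
          have h1t : (0:ℝ) < 1 + t := by linarith
          have e1 : (1-t^2)^c * (t/(1+t))^c = (t*(1-t))^c := by
            rw [← Real.mul_rpow (by nlinarith) (by positivity)]
            congr 1
            field_simp
            ring
          simp only [hGin]
          rw [← e1]
          ring
      _ = ∫ t in (0:ℝ)..1, (P i).eval t * (P j).eval (2*t-1) * (t * (1-t))^c :=
          ioo_eq 0 1 (by norm_num) _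
      _ = f i j := (hf i j).symm
  -- ⟪g k, g l⟫ is the required integral
  have inner_g_g : (inner ℝ (g k) (g l) : ℝ) = ∫ x in (0:ℝ)..1,
      (P k).eval (2 * x - 1) * (P l).eval (2 * x - 1) * x ^ (2 * lam - 1) *
        ((1 - x) / (1 + x)) ^ c := by
    rw [inner_eq _ _ _ _ (ae_eq_g k) (ae_eq_g l), key]
    have h1 : ∀ t, (1 - t^2)^c * (G k t * G l t)
        = Set.indicator (Set.Ioo (0:ℝ) 1)
            (fun t => (1-t^2)^c * (Gin k t * Gin l t)) t := by
      intro t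
      by_cases ht : t ∈ Set.Ioo (0:ℝ) 1 <;>
        simp [hG, Set.indicator_of_mem, Set.indicator_of_notMem, ht]
    calc (∫ t in S, (1 - t^2)^c * (G k t * G l t))
        = ∫ t in S, Set.indicator (Set.Ioo (0:ℝ) 1)
            (fun t => (1-t^2)^c * (Gin k t * Gin l t)) t :=
          integral_congr_ae (ae_of_all _ fun t => h1 t)
      _ = ∫ t in Set.Ioo (0:ℝ) 1, (1-t^2)^c * (Gin k t * Gin l t) := ind_step _
      _ = ∫ t in Set.Ioo (0:ℝ) 1,
            (P k).eval (2*t-1) * (P l).eval (2*t-1) * t ^ (2 * lam - 1) *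
              ((1 - t) / (1 + t)) ^ c := by
          refine setIntegral_congr_fun measurableSet_Ioo (fun t ht => ?_)
          obtain ⟨ht0, ht1⟩ := ht
          have h1t : (0:ℝ) < 1 + t := by linarith
          have hq : (0:ℝ) ≤ t/(1+t) := by positivity
          have h12 : (0:ℝ) ≤ 1 - t^2 := by nlinarith
          have hz : (1-t^2)^c * ((t/(1+t))^c * (t/(1+t))^c)
              = t^(2*lam-1) * ((1-t)/(1+t))^c := by
            rw [← Real.mul_rpow hq hq, ← Real.mul_rpow h12 (mul_nonneg hq hq)]
            have ht2 : t^(2*lam-1) = (t^2)^c := by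
              rw [← Real.rpow_natCast t 2, ← Real.rpow_mul ht0.le]
              congr 1
              rw [hc]; push_cast; ring
            have hfrac : (0:ℝ) ≤ (1-t)/(1+t) := div_nonneg (by linarith) h1t.le
            rw [ht2, ← Real.mul_rpow (by positivity) hfrac]
            congr 1
            field_simp
            ring
          simp only [hGin]
          calc (1-t^2)^c * ((P k).eval (2*t-1) * (t/(1+t))^c *
                  ((P l).eval (2*t-1) * (t/(1+t))^c))
              = (P k).eval (2*t-1) * (P l).eval (2*t-1) *
                  ((1-t^2)^c * ((t/(1+t))^c * (t/(1+t))^c)) := by ring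
            _ = (P k).eval (2*t-1) * (P l).eval (2*t-1) *
                  (t^(2*lam-1) * ((1-t)/(1+t))^c) := by rw [hz]
            _ = (P k).eval (2*t-1) * (P l).eval (2*t-1) * t ^ (2 * lam - 1) *
                  ((1 - t) / (1 + t)) ^ c := by ring
      _ = ∫ x in (0:ℝ)..1,
            (P k).eval (2 * x - 1) * (P l).eval (2 * x - 1) * x ^ (2 * lam - 1) *
              ((1 - x) / (1 + x)) ^ c := ioo_eq 0 1 (by norm_num) _
  -- orthonormality
  have horth2 : Orthonormal ℝ e := by
    rw [orthonormal_iff_ite]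
    intro i j
    rw [inner_eq _ _ _ _ (ae_eq_e i) (ae_eq_e j), key, ← horth i j,
      intervalIntegral.integral_of_le (by norm_num : (-1:ℝ) ≤ 1),
      integral_Ioc_eq_integral_Ioo]
    exact setIntegral_congr_fun measurableSet_Ioo (fun t _ => by ring)
  -- a linear map from polynomials to L²
  set L : Polynomial ℝ →ₗ[ℝ] Lp ℝ 2 μ :=
    { toFun := fun q => (memP q).toLp (fun t => q.eval t)
      map_add' := by
        intro x y
        rw [show ((memP x).toLp (fun t => x.eval t) + (memP y).toLp (fun t => y.eval t))
            = ((memP x).add (memP y)).toLp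
                ((fun t => x.eval t) + (fun t => y.eval t)) from
            (MemLp.toLp_add _ _).symm]
        refine MemLp.toLp_congr _ _ (ae_of_all _ fun t => ?_)
        simp
      map_smul' := by
        intro m x
        simp only [RingHom.id_apply]
        rw [show (m • (memP x).toLp (fun t => x.eval t))
            = ((memP x).const_smul m).toLp (m • (fun t => x.eval t)) from
            (MemLp.toLp_const_smul _ _).symm]
        refine MemLp.toLp_congr _ _ (ae_of_all _ fun t => ?_)
        simp } with hL
  have hLP : ∀ i, L (P i) = e i := fun i => rfl
  -- every polynomial lands in the span of e
  have hLspan : ∀ q : Polynomial ℝ, L q ∈ Submodule.span ℝ (Set.range e) := by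
    intro q
    have hq := polySpan P hdeg (fun n => (hlead n).ne') q.natDegree q le_rfl
    have h2 : L q ∈ Submodule.map L (Submodule.span ℝ (Set.range P)) :=
      Submodule.mem_map_of_mem hq
    rw [Submodule.map_span, ← Set.range_comp] at h2
    have : (⇑L ∘ P) = e := funext fun i => hLP i
    rwa [this] at h2
  -- density of the span
  have hspan : ⊤ ≤ (Submodule.span ℝ (Set.range e)).topologicalClosure := by
    intro x _
    have hd : DenseRange (BoundedContinuousFunction.toLp (E := ℝ) 2 μ ℝ) :=
      BoundedContinuousFunction.toLp_denseRange (𝕜 := ℝ) (E := ℝ) (μ := μ) (by norm_num)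
    have hx : x ∈ closure (Set.range (BoundedContinuousFunction.toLp (E := ℝ) 2 μ ℝ)) := by
      rw [hd.closure_range]; trivial
    have hsub2 : Set.range (BoundedContinuousFunction.toLp (E := ℝ) 2 μ ℝ) ⊆
        ((Submodule.span ℝ (Set.range e)).topologicalClosure : Set (Lp ℝ 2 μ)) := by
      rintro _ ⟨F, rfl⟩
      rw [Submodule.topologicalClosure_coe]
      refine Metric.mem_closure_iff.mpr (fun ε hε => ?_)
      set M : ℝ := (measureUnivNNReal μ : ℝ) ^ ((2:ℝ≥0∞)).toReal⁻¹ with hM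
      have hM0 : 0 ≤ M := Real.rpow_nonneg (NNReal.coe_nonneg _) _
      have hε' : 0 < ε / (M + 1) := div_pos hε (by linarith)
      obtain ⟨q, hq⟩ := exists_polynomial_near_of_continuousOn (-1) 1 F
        F.continuous.continuousOn (ε / (M + 1)) hε'
      refine ⟨L q, hLspan q, ?_⟩
      rw [dist_comm, dist_eq_norm]
      have hLq : ⇑(L q) =ᵐ[μ] (fun t => q.eval t) := MemLp.coeFn_toLp (memP q)
      have hb : ‖L q - BoundedContinuousFunction.toLp (E := ℝ) 2 μ ℝ F‖ ≤ M * (ε / (M + 1)) := by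
        refine Lp.norm_le_of_ae_bound hε'.le ?_
        filter_upwards [ae_S, Lp.coeFn_sub (L q) (BoundedContinuousFunction.toLp (E := ℝ) 2 μ ℝ F),
          hLq, BoundedContinuousFunction.coeFn_toLp 2 μ ℝ F] with t htS hsubt hqt hFt
        rw [hsubt, Pi.sub_apply, hqt, hFt, Real.norm_eq_abs]
        exact (hq t ⟨htS.1.le, htS.2.le⟩).le
      calc ‖L q - BoundedContinuousFunction.toLp (E := ℝ) 2 μ ℝ F‖
          ≤ M * (ε / (M + 1)) := hb
        _ < ε := by
            calc M * (ε / (M + 1)) = ε * (M / (M + 1)) := by ring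
              _ < ε * 1 := by
                  exact mul_lt_mul_of_pos_left ((div_lt_one (by linarith)).mpr (by linarith)) hε
              _ = ε := mul_one ε
    exact closure_minimal hsub2 (Submodule.isClosed_topologicalClosure _) hx
  -- Parseval
  set b : HilbertBasis ℕ ℝ (Lp ℝ 2 μ) := HilbertBasis.mk horth2 hspan with hbdef
  have hbe : ⇑b = e := HilbertBasis.coe_mk _ _
  have hsum := b.hasSum_inner_mul_inner (g k) (g l)
  rw [hbe] at hsum
  have hfun : (fun i => (inner ℝ (g k) (e i) : ℝ) * inner ℝ (e i) (g l)) = fun i => f i k * f i l := by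
    funext i
    rw [real_inner_comm (e i) (g k), inner_e_g i k, inner_e_g i l]
  rw [hfun, inner_g_g] at hsum
  exact hsum
end
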